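/- Let k be a field, n a natural number, and W a Lagrangian subspace of k^n ⊕ k^n with respect to the standard symplectic form. Then there exist a subset S ⊆ Fin n and a symmetric n × n matrix Z over k such that F_S(W) = {(x, Z x) : x ∈ k^n}, where F_S is the linear symplectomorphism of k^n ⊕ k^n that for each i ∈ S replaces the coordinates (xᵢ, zᵢ) by (zᵢ, −xᵢ) and leaves all coordinates with index not in S unchanged. In other words, every Lagrangian subspace can be brought to graph-state form by a partial Fourier transform. -/

import Mathlib

namespace Statement12

variable {k : Type*} [Field k]

/-- Dot product on `k^n`. -/
def dot {n : ℕ} (x y : Fin n → k) : k := ∑ i, x i * y i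

/-- The standard symplectic form on `k^n ⊕ k^n`:
`ω((x,z),(x',z')) = ⟨x,z'⟩ − ⟨z,x'⟩`. -/
def sf {n : ℕ} (v w : (Fin n → k) × (Fin n → k)) : k :=
  dot v.1 w.2 - dot v.2 w.1

/-- The partial Fourier transform `F_S` on `k^n ⊕ k^n`: for each `i ∈ S` it
replaces the coordinates `(xᵢ, zᵢ)` by `(zᵢ, −xᵢ)` and leaves coordinates with
index not in `S` unchanged. -/
def FS {n : ℕ} (S : Finset (Fin n)) :
    ((Fin n → k) × (Fin n → k)) → ((Fin n → k) × (Fin n → k)) :=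
  fun p => (fun i => if i ∈ S then p.2 i else p.1 i,
            fun i => if i ∈ S then -p.1 i else p.2 i)

variable {n : ℕ}

lemma dot_comm (x y : Fin n → k) : dot x y = dot y x := by
  simp [dot, mul_comm]

lemma dot_single_left (i : Fin n) (y : Fin n → k) : dot (Pi.single i 1) y = y i := by
  simp [dot, Pi.single_apply]

lemma dot_zero_left (y : Fin n → k) : dot (0 : Fin n → k) y = 0 := by
  simp [dot]

/-- The dot product as a bilinear form. -/
def B0 (k : Type*) [Field k] (n : ℕ) : LinearMap.BilinForm k (Fin n → k) :=
  LinearMap.mk₂ k dot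
    (fun x x' y => by simp [dot, add_mul, Finset.sum_add_distrib])
    (fun c x y => by simp [dot, Finset.mul_sum, mul_assoc])
    (fun x y y' => by simp [dot, mul_add, Finset.sum_add_distrib])
    (fun c x y => by simp [dot, Finset.mul_sum]; ring_nf; simp [mul_assoc, mul_comm, mul_left_comm])

@[simp] lemma B0_apply (x y : Fin n → k) : B0 k n x y = dot x y := rfl

lemma B0_refl : (B0 k n).IsRefl := fun x y h => by
  rwa [B0_apply, dot_comm]

lemma B0_orth_top : (B0 k n).orthogonal ⊤ = ⊥ := by
  rw [eq_bot_iff]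
  intro z hz
  have h : ∀ u, dot u z = 0 := fun u => hz u Submodule.mem_top
  have : z = 0 := funext fun i => by
    simpa using (dot_single_left i z).symm.trans (h _)
  simp [this]

lemma top_of_orth (U' : Submodule k (Fin n → k)) (h : (B0 k n).orthogonal U' = ⊥) :
    U' = ⊤ := by
  have h2 := LinearMap.BilinForm.finrank_add_finrank_orthogonal (B := B0 k n) B0_refl U'
  rw [h, B0_orth_top, inf_bot_eq, finrank_bot] at h2
  exact Submodule.eq_top_of_finrank_eq (by omega)

/-- `FS` as a linear map. -/
def FSL (S : Finset (Fin n)) :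
    ((Fin n → k) × (Fin n → k)) →ₗ[k] ((Fin n → k) × (Fin n → k)) where
  toFun := FS S
  map_add' p q := by
    refine Prod.ext ?_ ?_ <;> funext i <;> simp only [FS, Prod.fst_add, Prod.snd_add,
      Pi.add_apply] <;> split <;> ring
  map_smul' c p := by
    refine Prod.ext ?_ ?_ <;> funext i <;> simp only [FS, Prod.smul_fst, Prod.smul_snd,
      Pi.smul_apply, smul_eq_mul, RingHom.id_apply] <;> split <;> ring

@[simp] lemma FSL_apply (S : Finset (Fin n)) (p) : FSL (k := k) S p = FS S p := rfl

/-- Explicit inverse of `FS`. -/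
def GS (S : Finset (Fin n)) :
    ((Fin n → k) × (Fin n → k)) → ((Fin n → k) × (Fin n → k)) :=
  fun p => (fun i => if i ∈ S then -p.2 i else p.1 i,
            fun i => if i ∈ S then p.1 i else p.2 i)

lemma FS_GS (S : Finset (Fin n)) (p : (Fin n → k) × (Fin n → k)) : FS S (GS S p) = p := by
  refine Prod.ext ?_ ?_ <;> funext i <;> by_cases hi : i ∈ S <;> simp [FS, GS, hi]

lemma GS_FS (S : Finset (Fin n)) (p : (Fin n → k) × (Fin n → k)) : GS S (FS S p) = p := by
  refine Prod.ext ?_ ?_ <;> funext i <;> by_cases hi : i ∈ S <;> simp [FS, GS, hi]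

lemma sf_FS (S : Finset (Fin n)) (v w : (Fin n → k) × (Fin n → k)) :
    sf (FS S v) (FS S w) = sf v w := by
  simp only [sf, dot, FS, ← Finset.sum_sub_distrib]
  refine Finset.sum_congr rfl fun i _ => ?_
  by_cases hi : i ∈ S <;> simp only [hi, if_true, if_false] <;> ring

lemma sf_GS (S : Finset (Fin n)) (v w : (Fin n → k) × (Fin n → k)) :
    sf (GS S v) (GS S w) = sf v w := by
  rw [← sf_FS S (GS S v) (GS S w), FS_GS, FS_GS]

lemma repr_sum (T : Finset (Fin n)) (x : Fin n → k) (hx : ∀ i ∉ T, x i = 0) :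
    x = ∑ i ∈ T, x i • (Pi.single i 1 : Fin n → k) := by
  funext j
  rw [Finset.sum_apply]
  simp only [Pi.smul_apply, Pi.single_apply, smul_eq_mul, mul_ite, mul_one, mul_zero]
  rw [Finset.sum_ite_eq]
  by_cases h : j ∈ T <;> simp [h, hx j]

lemma mem_span_range_single (x : Fin n → k) :
    x ∈ Submodule.span k (Set.range fun i => Pi.single i (1 : k)) := by
  rw [repr_sum Finset.univ x (by simp)]
  exact Submodule.sum_mem _ fun i _ =>
    Submodule.smul_mem _ _ (Submodule.subset_span ⟨i, rfl⟩)

theorem statement12 (n : ℕ) (W : Submodule k ((Fin n → k) × (Fin n → k)))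
    (hW : ∀ v : (Fin n → k) × (Fin n → k), v ∈ W ↔ ∀ w ∈ W, sf v w = 0) :
    ∃ (S : Finset (Fin n)) (Z : Matrix (Fin n) (Fin n) k),
      Z.transpose = Z ∧
        FS S '' (W : Set ((Fin n → k) × (Fin n → k))) =
          {p : (Fin n → k) × (Fin n → k) | ∃ x : Fin n → k, p = (x, Z.mulVec x)} := by
  classical
  set U : Submodule k (Fin n → k) := W.map (LinearMap.fst k _ _) with hUdef
  obtain ⟨s, hsU, hspan_s, hs_li⟩ := exists_linearIndependent k (U : Set (Fin n → k))
  rw [Submodule.span_eq] at hspan_s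
  set eb : Fin n → (Fin n → k) := fun i => Pi.single i 1 with heb
  obtain ⟨b, hbt, hsb, htb, hb_li⟩ : ∃ b ⊆ s ∪ Set.range eb, s ⊆ b ∧
      s ∪ Set.range eb ⊆ Submodule.span k b ∧ LinearIndependent k ((↑) : b → (Fin n → k)) :=
    exists_linearIndepOn_id_extension hs_li
      (Set.subset_union_left : s ⊆ s ∪ Set.range eb)
  set S : Finset (Fin n) := Finset.univ.filter (fun i => eb i ∈ b \ s) with hSdef
  set Sp : Submodule k (Fin n → k) := Submodule.span k (b \ s) with hSpdef
  have hbs_sub : b \ s ⊆ Set.range eb := fun x hx => (hbt hx.1).resolve_left hx.2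
  have hSmem : ∀ i, i ∈ S ↔ eb i ∈ b \ s := fun i => by simp [hSdef]
  -- the span of b \ s is a complement of U
  have hmeet : U ⊓ Sp = ⊥ := by
    have hdisj := hb_li.disjoint_span_image
      (s := {x : b | ↑x ∈ s}) (t := {x : b | ↑x ∉ s})
      (Set.disjoint_left.mpr fun a ha ha' => ha' ha)
    have h1 : Subtype.val '' {x : b | ↑x ∈ s} = s := by
      ext y
      constructor
      · rintro ⟨⟨y, hyb⟩, hy, rfl⟩; exact hy
      · intro hy; exact ⟨⟨y, hsb hy⟩, hy, rfl⟩
    have h2 : Subtype.val '' {x : b | ↑x ∉ s} = b \ s := by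
      ext y
      constructor
      · rintro ⟨⟨y, hyb⟩, hy, rfl⟩; exact ⟨hyb, hy⟩
      · rintro ⟨hyb, hys⟩; exact ⟨⟨y, hyb⟩, hys, rfl⟩
    rw [h1, h2, hspan_s] at hdisj
    exact disjoint_iff.mp hdisj
  have hsup : U ⊔ Sp = ⊤ := by
    rw [eq_top_iff]
    have hb_le : Submodule.span k b ≤ U ⊔ Sp := by
      rw [Submodule.span_le]
      intro x hx
      by_cases hxs : x ∈ s
      · exact Submodule.mem_sup_left (hspan_s ▸ Submodule.subset_span hxs)
      · exact Submodule.mem_sup_right (Submodule.subset_span ⟨hx, hxs⟩)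
    have ht_le : Submodule.span k (s ∪ Set.range eb) ≤ Submodule.span k b :=
      Submodule.span_le.2 htb
    intro x _
    exact hb_le (ht_le (Submodule.span_mono Set.subset_union_right
      (mem_span_range_single x)))
  -- the transformed subspace
  set W' : Submodule k ((Fin n → k) × (Fin n → k)) := W.map (FSL S) with hW'def
  have memW' : ∀ v, v ∈ W' ↔ GS S v ∈ W := by
    intro v
    constructor
    · intro h
      obtain ⟨w, hw, rfl⟩ := Submodule.mem_map.1 h
      simpa [GS_FS] using hw
    · intro h
      exact Submodule.mem_map.2 ⟨GS S v, h, FS_GS S v⟩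
  have lagW' : ∀ v, v ∈ W' ↔ ∀ w ∈ W', sf v w = 0 := by
    intro v
    rw [memW', hW]
    constructor
    · intro h w hw
      have h0 := h (GS S w) ((memW' w).1 hw)
      rwa [sf_GS] at h0
    · intro h w hw
      have hw' : FS S w ∈ W' := Submodule.mem_map.2 ⟨w, hw, rfl⟩
      have h0 := h _ hw'
      rw [← sf_FS S (GS S v) w, FS_GS]
      exact h0
  -- the key injectivity statement
  have keyE : ∀ y : Fin n → k, ((0 : Fin n → k), y) ∈ W' → y = 0 := by
    intro y hy
    obtain ⟨⟨x, z⟩, hxz, hFS⟩ := Submodule.mem_map.1 hy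
    have h1 : ∀ i, (if i ∈ S then z i else x i) = 0 := fun i =>
      congrFun (congrArg Prod.fst hFS) i
    have h2 : ∀ i, (if i ∈ S then -x i else z i) = y i := fun i =>
      congrFun (congrArg Prod.snd hFS) i
    have hx0 : ∀ i ∉ S, x i = 0 := fun i hi => by simpa [hi] using h1 i
    have hz0 : ∀ i ∈ S, z i = 0 := fun i hi => by simpa [hi] using h1 i
    have hxU : x ∈ U := Submodule.mem_map.2 ⟨(x, z), hxz, rfl⟩
    have hxSp : x ∈ Sp := by
      rw [repr_sum S x hx0]
      exact Submodule.sum_mem _ fun i hi =>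
        Submodule.smul_mem _ _ (Submodule.subset_span ((hSmem i).1 hi))
    have hx : x = 0 := by
      have hb := hmeet ▸ Submodule.mem_inf.2 ⟨hxU, hxSp⟩
      simpa using hb
    rw [hx] at hxz
    have hz : z = 0 := by
      have hle : U ⊔ Sp ≤ LinearMap.ker ((B0 k n).flip z) := by
        refine sup_le ?_ ?_
        · intro u hu
          obtain ⟨⟨u', w'⟩, hw', hu'⟩ := Submodule.mem_map.1 hu
          have h0 := (hW (0, z)).1 hxz (u', w') hw'
          simp only [sf, dot_zero_left, zero_sub, neg_eq_zero] at h0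
          simp only [LinearMap.mem_ker, LinearMap.flip_apply, B0_apply]
          rw [← hu']
          show dot u' z = 0
          rw [dot_comm]; exact h0
        · rw [hSpdef]
          refine Submodule.span_le.2 ?_
          intro v hv
          obtain ⟨i, rfl⟩ := hbs_sub hv
          have hiS : i ∈ S := (hSmem i).2 hv
          simp only [SetLike.mem_coe, LinearMap.mem_ker, LinearMap.flip_apply, B0_apply]
          show dot (Pi.single i 1) z = 0
          rw [dot_single_left]
          exact hz0 i hiS
      funext i
      have hi : eb i ∈ LinearMap.ker ((B0 k n).flip z) := hle (hsup ▸ Submodule.mem_top)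
      have : dot (Pi.single i 1) z = 0 := hi
      simpa [dot_single_left] using this
    funext i
    rw [← h2 i]
    by_cases hi : i ∈ S <;> simp [hi, hx, hz]
  -- uniqueness of the second coordinate
  have uniq : ∀ (a z z' : Fin n → k), (a, z) ∈ W' → (a, z') ∈ W' → z = z' := by
    intro a z z' h h'
    have hsub : ((a, z) - (a, z')) ∈ W' := Submodule.sub_mem _ h h'
    have h0 : ((0 : Fin n → k), z - z') ∈ W' := by
      simpa [Prod.mk_sub_mk, sub_self] using hsub
    exact sub_eq_zero.1 (keyE _ h0)
  -- surjectivity of the first projection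
  have surj : ∀ y : Fin n → k, ∃ zz, (y, zz) ∈ W' := by
    set U' : Submodule k (Fin n → k) := W'.map (LinearMap.fst k _ _) with hU'def
    have hU'orth : (B0 k n).orthogonal U' = ⊥ := by
      rw [eq_bot_iff]
      intro z hz
      have hzW' : ((0 : Fin n → k), z) ∈ W' := by
        rw [lagW']
        rintro ⟨a, c⟩ hw
        have haU' : a ∈ U' := Submodule.mem_map.2 ⟨(a, c), hw, rfl⟩
        have hdz : dot z a = 0 := by rw [dot_comm]; exact hz a haU'
        simp [sf, dot_zero_left, hdz]
      simpa using keyE z hzW'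
    have hU'top : U' = ⊤ := top_of_orth _ hU'orth
    intro y
    have hy : y ∈ U' := hU'top ▸ Submodule.mem_top
    obtain ⟨⟨a, c⟩, hw, h⟩ := Submodule.mem_map.1 hy
    refine ⟨c, ?_⟩
    have : a = y := h
    rwa [← this]
  -- build the matrix
  let p1 : W' →ₗ[k] (Fin n → k) := (LinearMap.fst k _ _).comp W'.subtype
  have hinj : Function.Injective p1 := by
    rintro ⟨⟨a, c⟩, hm⟩ ⟨⟨a', c'⟩, hm'⟩ h
    have ha : a = a' := h
    subst ha
    have hc : c = c' := uniq a c c' hm hm'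
    simp [hc]
  have hsurj : Function.Surjective p1 := fun y => by
    obtain ⟨zz, h⟩ := surj y
    exact ⟨⟨(y, zz), h⟩, rfl⟩
  let eqv := LinearEquiv.ofBijective p1 ⟨hinj, hsurj⟩
  let T : (Fin n → k) →ₗ[k] (Fin n → k) :=
    (LinearMap.snd k _ _).comp (W'.subtype.comp eqv.symm.toLinearMap)
  have hfst : ∀ x, ((eqv.symm x : W') : (Fin n → k) × (Fin n → k)).1 = x := fun x =>
    eqv.apply_symm_apply x
  have hT : ∀ x, (x, T x) ∈ W' := by
    intro x
    have hval : ((eqv.symm x : W') : (Fin n → k) × (Fin n → k)) = (x, T x) :=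
      Prod.ext (hfst x) rfl
    rw [← hval]
    exact (eqv.symm x).2
  set Z := LinearMap.toMatrix' T with hZdef
  have hZmul : ∀ x, Z.mulVec x = T x := fun x => by
    rw [hZdef, ← Matrix.toLin'_apply, Matrix.toLin'_toMatrix']
  refine ⟨S, Z, ?_, ?_⟩
  · -- symmetry
    have hsym : ∀ i j, Z i j = Z j i := by
      intro i j
      have h0 := (lagW' _).1 (hT (Pi.single j 1)) _ (hT (Pi.single i 1))
      simp only [sf] at h0
      have e1 : dot (Pi.single j (1 : k)) (T (Pi.single i 1)) = T (Pi.single i 1) j :=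
        dot_single_left _ _
      have e2 : dot (T (Pi.single j 1)) (Pi.single i (1 : k)) = T (Pi.single j 1) i := by
        rw [dot_comm]; exact dot_single_left _ _
      rw [e1, e2] at h0
      have key : T (Pi.single j 1) i = T (Pi.single i 1) j := (sub_eq_zero.1 h0).symm
      have f1 : Z i j = T (Pi.single j 1) i := by
        rw [← hZmul]; simp
      have f2 : Z j i = T (Pi.single i 1) j := by
        rw [← hZmul]; simp
      rw [f1, f2, key]
    exact Matrix.ext fun i j => hsym j i
  · have hset : FS S '' (W : Set ((Fin n → k) × (Fin n → k))) =
        (W' : Set ((Fin n → k) × (Fin n → k))) := by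
      rw [hW'def, Submodule.map_coe]
      rfl
    rw [hset]
    ext p
    constructor
    · intro hp
      refine ⟨p.1, ?_⟩
      have hp' : (p.1, p.2) ∈ W' := hp
      have hpz : p.2 = T p.1 := uniq p.1 p.2 (T p.1) hp' (hT p.1)
      rw [hZmul]
      exact Prod.ext rfl hpz
    · rintro ⟨x, rfl⟩
      show (x, Z.mulVec x) ∈ W'
      rw [hZmul]
      exact hT x

end Statement12
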